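/- Let S be a semiring (commutative, possibly without neutral elements) that is additively divisible, torsion (every element has finite order), and finitely generated. Then S is additively idempotent. -/

import Mathlib

/-- `nmul n a` is the `n`-fold sum `a + ⋯ + a` (for `n ≥ 1`; `nmul 0 a = a` is junk). -/
def nmul {S : Type*} [Add S] (n : ℕ) (a : S) : S :=
  Nat.rec a (fun _ b => b + a) (n - 1)

/-- The subsemiring generated by `A`: the smallest subset of `S` containing `A`
and closed under addition and multiplication. -/
def genClosure {S : Type*} [Add S] [Mul S] (A : Set S) : Set S :=
  ⋂₀ {T : Set S | A ⊆ T ∧ (∀ x ∈ T, ∀ y ∈ T, x + y ∈ T) ∧ (∀ x ∈ T, ∀ y ∈ T, x * y ∈ T)}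

section Aux

variable {S : Type*} [AddCommSemigroup S]

theorem nmul_one' (a : S) : nmul 1 a = a := rfl

theorem nmul_succ' (a : S) {n : ℕ} (hn : 1 ≤ n) :
    nmul (n + 1) a = nmul n a + a := by
  obtain ⟨n, rfl⟩ : ∃ m, n = m + 1 := ⟨n - 1, by omega⟩
  rfl

theorem nmul_add_nmul (a : S) {p q : ℕ} (hp : 1 ≤ p) (hq : 1 ≤ q) :
    nmul (p + q) a = nmul p a + nmul q a := by
  induction q, hq using Nat.le_induction with
  | base => exact nmul_succ' a hp
  | succ q hq ih =>
      rw [← Nat.add_assoc, nmul_succ' a (by omega : 1 ≤ p + q), ih,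
        nmul_succ' a hq, add_assoc]

theorem nmul_nmul (a : S) {p q : ℕ} (hp : 1 ≤ p) (hq : 1 ≤ q) :
    nmul p (nmul q a) = nmul (p * q) a := by
  induction p, hp using Nat.le_induction with
  | base => rw [one_mul]; exact nmul_one' _
  | succ p hp ih =>
      rw [nmul_succ' _ hp, ih, Nat.succ_mul,
        nmul_add_nmul a (Nat.mul_pos hp hq) hq]

theorem nmul_add_dist (a b : S) {n : ℕ} (hn : 1 ≤ n) :
    nmul n (a + b) = nmul n a + nmul n b := by
  induction n, hn using Nat.le_induction with
  | base => rfl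
  | succ n hn ih =>
      rw [nmul_succ' _ hn, ih, nmul_succ' a hn, nmul_succ' b hn,
        add_add_add_comm]

/-- Shift a torsion relation: from `m·a = (m+k)·a`, get `M·a = (M+K)·a`
for every `M ≥ m` and every positive multiple `K` of `k`. -/
theorem nmul_stable (a : S) {m k : ℕ} (hm : 1 ≤ m) (hk : 1 ≤ k)
    (h : nmul m a = nmul (m + k) a) :
    ∀ M K : ℕ, m ≤ M → k ∣ K → 1 ≤ K → nmul M a = nmul (M + K) a := by
  have step : ∀ M : ℕ, m ≤ M → nmul M a = nmul (M + k) a := by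
    intro M hM
    obtain ⟨j, rfl⟩ := Nat.exists_eq_add_of_le hM
    rcases Nat.eq_zero_or_pos j with hj | hj
    · subst hj; simpa using h
    · have h1 : nmul (m + j) a = nmul m a + nmul j a := nmul_add_nmul a hm hj
      have h2 : nmul (m + j + k) a = nmul (m + k) a + nmul j a := by
        have : m + j + k = (m + k) + j := by omega
        rw [this, nmul_add_nmul a (by omega) hj]
      rw [h1, h2, h]
  intro M K hM hdvd hK
  obtain ⟨t, rfl⟩ := hdvd
  clear hK
  induction t with
  | zero => simp
  | succ t ih =>
      have : M + k * (t + 1) = (M + k * t) + k := by ring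
      rw [this, ← step (M + k * t) (by omega), ih]

/-- Normalize the torsion hypothesis. -/
theorem torsion_norm {a : S}
    (h : ∃ m n : ℕ, 1 ≤ m ∧ 1 ≤ n ∧ m ≠ n ∧ nmul m a = nmul n a) :
    ∃ m k : ℕ, 1 ≤ m ∧ 1 ≤ k ∧ nmul m a = nmul (m + k) a := by
  obtain ⟨m, n, hm, hn, hne, heq⟩ := h
  rcases Nat.lt_or_ge m n with hlt | hge
  · exact ⟨m, n - m, hm, by omega, by rwa [Nat.add_sub_cancel' hlt.le]⟩
  · have hlt : n < m := by omega
    exact ⟨n, m - n, hn, by omega, by rw [Nat.add_sub_cancel' hlt.le]; exact heq.symm⟩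

end Aux

theorem stmt_9 {S : Type*} [AddCommSemigroup S] [CommSemigroup S]
    (hdl : ∀ a b c : S, a * (b + c) = a * b + a * c)
    (hdr : ∀ a b c : S, (a + b) * c = a * c + b * c)
    (hdiv : ∀ a : S, ∀ n : ℕ, 1 ≤ n → ∃ b : S, nmul n b = a)
    (htor : ∀ a : S, ∃ m n : ℕ, 1 ≤ m ∧ 1 ≤ n ∧ m ≠ n ∧ nmul m a = nmul n a)
    (hfg : ∃ A : Set S, A.Finite ∧ genClosure A = Set.univ) :
    ∀ a : S, a + a = a := by
  -- multiplication by a fixed element commutes with nmul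
  have nmul_mul : ∀ (x y : S) {n : ℕ}, 1 ≤ n → nmul n (x * y) = nmul n x * y := by
    intro x y n hn
    induction n, hn using Nat.le_induction with
    | base => rfl
    | succ n hn ih => rw [nmul_succ' _ hn, ih, nmul_succ' x hn, hdr]
  obtain ⟨A, hAfin, hAgen⟩ := hfg
  -- Step 1: uniform torsion exponents on the generators
  have hunif : ∃ M K : ℕ, 1 ≤ M ∧ 1 ≤ K ∧ ∀ g ∈ A, nmul M g = nmul (M + K) g := by
    refine Set.Finite.induction_on (motive := fun s _ => ∃ M K : ℕ, 1 ≤ M ∧ 1 ≤ K ∧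
      ∀ g ∈ s, nmul M g = nmul (M + K) g) A hAfin
      ⟨1, 1, le_refl 1, le_refl 1, by simp⟩ ?_
    rintro a s _ _ ⟨M, K, hM, hK, hs⟩
    obtain ⟨m, k, hm, hk, heq⟩ := torsion_norm (htor a)
    refine ⟨max M m, K * k, le_trans hM (le_max_left _ _), Nat.mul_pos hK hk, ?_⟩
    rintro g (rfl | hg)
    · exact nmul_stable g hm hk heq _ _ (le_max_right _ _) (Dvd.intro K (Nat.mul_comm k K))
        (Nat.mul_pos hK hk)
    · exact nmul_stable g hM hK (hs g hg) _ _ (le_max_left _ _)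
        (Dvd.intro_left k (Nat.mul_comm k K)) (Nat.mul_pos hK hk)
  obtain ⟨M, K, hM, hK, hgen⟩ := hunif
  -- Step 2: this relation propagates to all of S via the closure
  have h1 : ∀ x : S, nmul M x = nmul (M + K) x := by
    have hMK : (1:ℕ) ≤ M + K := by omega
    set T : Set S := {x | nmul M x = nmul (M + K) x} with hT
    have hTin : T ∈ {T : Set S | A ⊆ T ∧ (∀ x ∈ T, ∀ y ∈ T, x + y ∈ T) ∧
        (∀ x ∈ T, ∀ y ∈ T, x * y ∈ T)} := by
      refine ⟨fun g hg => hgen g hg, ?_, ?_⟩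
      · intro x hx y hy
        show nmul M (x + y) = nmul (M + K) (x + y)
        rw [nmul_add_dist x y hM, nmul_add_dist x y hMK, hx, hy]
      · intro x hx y hy
        show nmul M (x * y) = nmul (M + K) (x * y)
        rw [nmul_mul x y hM, nmul_mul x y hMK, hx]
    intro x
    have : x ∈ T := by
      have hsub : genClosure A ⊆ T := Set.sInter_subset_of_mem hTin
      exact hsub (by rw [hAgen]; trivial)
    exact this
  -- Step 3: every element absorbs K·itself
  have h2 : ∀ a : S, a + nmul K a = a := by
    intro a
    obtain ⟨b, hb⟩ := hdiv a M hM
    have : a + nmul K a = nmul (M + K * M) b := by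
      rw [← hb, nmul_nmul b hK hM, ← nmul_add_nmul b hM (Nat.mul_pos hK hM)]
    rw [this, ← nmul_stable b hM hK (h1 b) M (K * M) (le_refl M)
      (Dvd.intro M rfl) (Nat.mul_pos hK hM), hb]
  -- Step 4: hence j·x + K·x = j·x for all j ≥ 1
  have h3 : ∀ (x : S) (j : ℕ), 1 ≤ j → nmul j x + nmul K x = nmul j x := by
    intro x j hj
    induction j, hj using Nat.le_induction with
    | base => exact h2 x
    | succ j hj ih => rw [nmul_succ' x hj, add_right_comm, ih]
  -- Conclusion: write a = K·b, then a + a = 2K·b = K·b = a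
  intro a
  obtain ⟨b, hb⟩ := hdiv a K hK
  rw [← hb]
  exact h3 b K hK
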